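/- Let N ≥ 1 be an integer, q ∈ ℝ^N with q_i > 0 for all i, and ρ > 0. For λ ≥ 0 define p(λ)_i := q_i^{1/(1+λ)} / Σ_{j=1}^N q_j^{1/(1+λ)} and K(λ) := Σ_{i=1}^N p(λ)_i·log(N·p(λ)_i). If K(0) ≥ ρ, then there exists λ* ≥ 0 with K(λ*) = ρ (equivalently, the binary-search kernel equation f(λ*) = 0 of FedMABA, where f(λ) = K(λ) − ρ, has a nonnegative solution). -/
import Mathlib


/-- The exponentially reweighted vector `p(λ) i = (q i)^(1/(1+λ)) / ∑ j, (q j)^(1/(1+λ))`. -/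
noncomputable def tilt (N : ℕ) (q : Fin N → ℝ) (lam : ℝ) : Fin N → ℝ :=
  fun i => q i ^ ((1 : ℝ) / (1 + lam)) / ∑ j, q j ^ ((1 : ℝ) / (1 + lam))

/-- The KL divergence of `p(λ)` from the uniform vector,
`K(λ) = ∑ i, p(λ) i * log (N * p(λ) i)`. -/
noncomputable def tiltKL (N : ℕ) (q : Fin N → ℝ) (lam : ℝ) : ℝ :=
  ∑ i, tilt N q lam i * Real.log (N * tilt N q lam i)

/-- **Existence of the FedMABA binary-search root.** For `q i > 0` and `ρ > 0`, if
`K(0) ≥ ρ` then the kernel equation `K(λ*) = ρ` (i.e. `f(λ*) = K(λ*) - ρ = 0`) has a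
nonnegative solution `λ* ≥ 0`. -/
theorem tiltKL_eq_rho_exists (N : ℕ) (hN : 1 ≤ N) (q : Fin N → ℝ) (hq : ∀ i, 0 < q i)
    (ρ : ℝ) (hρ : 0 < ρ) (h0 : ρ ≤ tiltKL N q 0) :
    ∃ lam : ℝ, 0 ≤ lam ∧ tiltKL N q lam = ρ := by
  haveI : Nonempty (Fin N) := Fin.pos_iff_nonempty.mp hN
  set S : ℝ → ℝ := fun t => ∑ j, q j ^ t with hSdef
  have hSpos : ∀ t, 0 < S t := fun t =>
    Finset.sum_pos (fun j _ => Real.rpow_pos_of_pos (hq j) t) Finset.univ_nonempty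
  set F : ℝ → ℝ := fun t => ∑ i, (q i ^ t / S t) * Real.log (N * (q i ^ t / S t)) with hFdef
  have hcS : Continuous S := by
    apply continuous_finset_sum; intro j _
    exact Continuous.rpow continuous_const continuous_id (fun t => Or.inl (hq j).ne')
  have hcont : Continuous F := by
    apply continuous_finset_sum
    intro i _
    have hc1 : Continuous fun t : ℝ => q i ^ t :=
      Continuous.rpow continuous_const continuous_id (fun t => Or.inl (hq i).ne')
    have hratio : Continuous fun t => q i ^ t / S t := hc1.div hcS (fun t => (hSpos t).ne')
    refine hratio.mul (Continuous.log (continuous_const.mul hratio) (fun t => ?_))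
    have h1 : 0 < q i ^ t / S t := div_pos (Real.rpow_pos_of_pos (hq i) t) (hSpos t)
    have hN0 : (0 : ℝ) < N := by exact_mod_cast Nat.lt_of_lt_of_le Nat.zero_lt_one hN
    positivity
  have hF0 : F 0 = 0 := by
    have hS0 : S 0 = (N : ℝ) := by
      simp [hSdef, Real.rpow_zero]
    have hN0 : (0 : ℝ) < N := by exact_mod_cast Nat.lt_of_lt_of_le Nat.zero_lt_one hN
    simp [hFdef, hS0, Real.rpow_zero]
    right; left
    exact mul_inv_cancel₀ hN0.ne'
  have hKey : ∀ lam : ℝ, tiltKL N q lam = F (1 / (1 + lam)) := by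
    intro lam
    simp [tiltKL, tilt, hFdef, hSdef]
  have hF1 : ρ ≤ F 1 := by
    have := hKey 0
    norm_num at this
    rwa [this] at h0
  have hsub := intermediate_value_Icc (by norm_num : (0:ℝ) ≤ 1) hcont.continuousOn
  have hmem : ρ ∈ Set.Icc (F 0) (F 1) := ⟨by rw [hF0]; exact hρ.le, hF1⟩
  obtain ⟨t, ht, hFt⟩ := hsub hmem
  have htpos : 0 < t := by
    rcases lt_or_eq_of_le ht.1 with h | h
    · exact h
    · exfalso; rw [← h, hF0] at hFt; exact hρ.ne hFt
  refine ⟨1 / t - 1, ?_, ?_⟩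
  · have : 1 ≤ 1 / t := one_le_one_div htpos ht.2
    linarith
  · rw [hKey]
    have : 1 + (1 / t - 1) = 1 / t := by ring
    rw [this, one_div_one_div]
    exact hFt
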